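/- arXiv:2009.06696 — 2 statements merged into one kernel-verified Lean document; each statement's English description precedes it below -/
import Mathlib

section
/- Let P be a locally finite partially ordered set with a weak rank function r, and let κ be a P-kernel in the incidence algebra of P with coefficients in the polynomial ring ℤ[t]. Then there exists a unique element g ∈ 𝓘_{1/2}(P) such that \bar g = g * κ; that is, g x x = 1 for all x, for x < y either g x y = 0 or 2·deg(g x y) < r x y, and for all x ≤ y one has t^{r x y}·(g x y)(t^{-1}) = Σ_{x ≤ z ≤ y} (g x z)·(κ z y). (The element g is the left Kazhdan–Lusztig–Stanley function associated with κ.) -/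
open Finset Polynomial

/-- The bar involution on the incidence algebra of `P` over `ℤ[t]` relative to a weak rank
function `r`: it sends `f` to the function `x y ↦ t^(r x y) · (f x y)(t⁻¹)`, i.e. the
reflection of `f x y` at degree `r x y`. -/
noncomputable def IncidenceAlgebra.bar {P : Type*} [PartialOrder P] [LocallyFiniteOrder P]
    (r : P → P → ℕ) (f : IncidenceAlgebra (Polynomial ℤ) P) :
    IncidenceAlgebra (Polynomial ℤ) P :=
  ⟨fun x y => (f x y).reflect (r x y), fun x y h => by
    try simp only []
    rw [IncidenceAlgebra.apply_eq_zero_of_not_le h, Polynomial.reflect_zero]⟩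

namespace KLSAux

lemma reflect_reflect {R : Type*} [Semiring R] (N : ℕ) (p : Polynomial R) :
    (p.reflect N).reflect N = p := by
  ext j
  rw [coeff_reflect, coeff_reflect, revAt_invol]

lemma natDegree_reflect_le {R : Type*} [Semiring R] {N : ℕ} {p : Polynomial R}
    (hp : p.natDegree ≤ N) : (p.reflect N).natDegree ≤ N := by
  rw [natDegree_le_iff_coeff_eq_zero]
  intro j hj
  rw [coeff_reflect, revAt_eq_self_of_lt hj]
  exact coeff_eq_zero_of_natDegree_lt (lt_of_le_of_lt hp hj)

lemma reflect_sum {R : Type*} [Semiring R] {ι : Type*} (s : Finset ι) (f : ι → Polynomial R)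
    (N : ℕ) : (∑ i ∈ s, f i).reflect N = ∑ i ∈ s, (f i).reflect N := by
  ext j
  rw [coeff_reflect, finset_sum_coeff, finset_sum_coeff]
  exact Finset.sum_congr rfl fun i _ => (coeff_reflect N (f i) j).symm

/-- Minus the part of `Q` living in degrees `j` with `2j < N`. -/
noncomputable def lhn (N : ℕ) (Q : Polynomial ℤ) : Polynomial ℤ :=
  -∑ i ∈ Finset.range ((N + 1) / 2), Polynomial.C (Q.coeff i) * Polynomial.X ^ i

lemma lhn_coeff (N : ℕ) (Q : Polynomial ℤ) (j : ℕ) :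
    (lhn N Q).coeff j = if 2 * j < N then -Q.coeff j else 0 := by
  have h : j ∈ Finset.range ((N + 1) / 2) ↔ 2 * j < N := by
    rw [Finset.mem_range]; omega
  simp only [lhn, coeff_neg, finset_sum_coeff, coeff_C_mul, coeff_X_pow, mul_ite, mul_one,
    mul_zero, Finset.sum_ite_eq, h]
  split <;> simp

lemma lhn_zero (N : ℕ) : lhn N 0 = 0 := by
  ext j; simp [lhn_coeff]

lemma lhn_coeff_of_le (N : ℕ) (Q : Polynomial ℤ) (j : ℕ) (hj : N ≤ 2 * j) :
    (lhn N Q).coeff j = 0 := by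
  rw [lhn_coeff, if_neg (by omega)]

lemma lhn_half (N : ℕ) (Q : Polynomial ℤ) : lhn N Q = 0 ∨ 2 * (lhn N Q).natDegree < N := by
  by_cases h : lhn N Q = 0
  · exact Or.inl h
  · refine Or.inr ?_
    by_contra h2
    exact Polynomial.leadingCoeff_ne_zero.mpr h
      (lhn_coeff_of_le N Q _ (by omega))

lemma coeff_eq_zero_of_half {N : ℕ} {g : Polynomial ℤ} (hg : g = 0 ∨ 2 * g.natDegree < N)
    (j : ℕ) (hj : N ≤ 2 * j) : g.coeff j = 0 := by
  rcases hg with rfl | h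
  · simp
  · exact coeff_eq_zero_of_natDegree_lt (by omega)

lemma reflect_lhn_eq (N : ℕ) (Q : Polynomial ℤ) (hQd : Q.natDegree ≤ N)
    (hQs : Q.reflect N = -Q) : (lhn N Q).reflect N = lhn N Q + Q := by
  have hanti : ∀ i ≤ N, Q.coeff (N - i) = -Q.coeff i := by
    intro i hi
    have := congrArg (fun p => Polynomial.coeff p i) hQs
    simpa [coeff_reflect, revAt_le hi] using this
  ext j
  rw [coeff_reflect, coeff_add]
  rcases le_or_gt j N with hj | hj
  · rw [revAt_le hj, lhn_coeff, lhn_coeff]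
    rcases lt_trichotomy (2 * j) N with h | h | h
    · rw [if_neg (by omega), if_pos h]; ring
    · have hjj : N - j = j := by omega
      have h0 : Q.coeff j = 0 := by
        have := hanti j hj; rw [hjj] at this; linarith
      rw [if_neg (by omega), if_neg (by omega), h0]; ring
    · rw [if_pos (by omega), if_neg (by omega), hanti j hj]; ring
  · rw [revAt_eq_self_of_lt hj, lhn_coeff,
      coeff_eq_zero_of_natDegree_lt (lt_of_le_of_lt hQd hj)]
    simp

lemma eq_lhn {N : ℕ} {Q g : Polynomial ℤ} (hg : g = 0 ∨ 2 * g.natDegree < N)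
    (heq : g.reflect N = g + Q) : g = lhn N Q := by
  ext j
  rw [lhn_coeff]
  rcases lt_or_ge (2 * j) N with h | h
  · have hjN : j ≤ N := by omega
    have h1 := congrArg (fun p => Polynomial.coeff p j) heq
    simp only [coeff_reflect, revAt_le hjN, coeff_add] at h1
    rw [coeff_eq_zero_of_half hg (N - j) (by omega)] at h1
    rw [if_pos h]; linarith
  · rw [if_neg (by omega)]
    exact coeff_eq_zero_of_half hg j h

variable {P : Type*} [PartialOrder P] [LocallyFiniteOrder P]

lemma card_Icc_lt {x y z : P} (hz : z ∈ Finset.Ico x y) :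
    (Finset.Icc x z).card < (Finset.Icc x y).card := by
  obtain ⟨hxz, hzy⟩ := Finset.mem_Ico.mp hz
  apply Finset.card_lt_card
  refine ⟨Finset.Icc_subset_Icc_right hzy.le, fun hsub => ?_⟩
  have := hsub (Finset.mem_Icc.mpr ⟨hxz.trans hzy.le, le_rfl⟩)
  exact absurd (Finset.mem_Icc.mp this).2 hzy.not_ge

section Bar

lemma bar_apply (r : P → P → ℕ) (f : IncidenceAlgebra (Polynomial ℤ) P) (a b : P) :
    IncidenceAlgebra.bar r f a b = (f a b).reflect (r a b) := rfl

variable [DecidableEq P]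

lemma bar_mul (r : P → P → ℕ)
    (hr_add : ∀ x y z : P, x ≤ y → y ≤ z → r x y + r y z = r x z)
    (f g : IncidenceAlgebra (Polynomial ℤ) P)
    (hf : ∀ a b : P, a ≤ b → (f a b).natDegree ≤ r a b)
    (hg : ∀ a b : P, a ≤ b → (g a b).natDegree ≤ r a b) :
    IncidenceAlgebra.bar r (f * g) = IncidenceAlgebra.bar r f * IncidenceAlgebra.bar r g := by
  apply IncidenceAlgebra.ext
  intro a b hab
  rw [bar_apply, IncidenceAlgebra.mul_apply, IncidenceAlgebra.mul_apply, reflect_sum]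
  refine Finset.sum_congr rfl fun z hz => ?_
  obtain ⟨haz, hzb⟩ := Finset.mem_Icc.mp hz
  rw [bar_apply, bar_apply, ← hr_add a z b haz hzb]
  exact Polynomial.reflect_mul _ _ (hf a z haz) (hg z b hzb)

lemma bar_one (r : P → P → ℕ) (hr0 : ∀ x : P, r x x = 0) :
    IncidenceAlgebra.bar r (1 : IncidenceAlgebra (Polynomial ℤ) P) = 1 := by
  apply IncidenceAlgebra.ext
  intro a b _
  rw [bar_apply, IncidenceAlgebra.one_apply]
  split
  · rename_i h
    subst h
    rw [hr0, Polynomial.reflect_one, pow_zero]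
  · exact Polynomial.reflect_zero

lemma bar_bar (r : P → P → ℕ) (f : IncidenceAlgebra (Polynomial ℤ) P) :
    IncidenceAlgebra.bar r (IncidenceAlgebra.bar r f) = f := by
  apply IncidenceAlgebra.ext
  intro a b _
  rw [bar_apply, bar_apply, reflect_reflect]

end Bar

variable [DecidableEq P]

noncomputable def klsFun (r : P → P → ℕ) (κ : IncidenceAlgebra (Polynomial ℤ) P) :
    P → P → Polynomial ℤ
  | x, y =>
    if x = y then 1
    else lhn (r x y) (∑ z ∈ (Finset.Ico x y).attach, klsFun r κ x z.1 * κ z.1 y)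
  termination_by x y => (Finset.Icc x y).card
  decreasing_by exact card_Icc_lt z.2

lemma klsFun_self (r : P → P → ℕ) (κ : IncidenceAlgebra (Polynomial ℤ) P) (x : P) :
    klsFun r κ x x = 1 := by
  rw [klsFun]; simp

lemma klsFun_of_ne (r : P → P → ℕ) (κ : IncidenceAlgebra (Polynomial ℤ) P) {x y : P}
    (h : x ≠ y) :
    klsFun r κ x y = lhn (r x y) (∑ z ∈ Finset.Ico x y, klsFun r κ x z * κ z y) := by
  rw [klsFun, if_neg h]
  congr 1
  exact Finset.sum_attach (Finset.Ico x y) (fun z => klsFun r κ x z * κ z y)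

lemma klsFun_not_le (r : P → P → ℕ) (κ : IncidenceAlgebra (Polynomial ℤ) P) {x y : P}
    (h : ¬x ≤ y) : klsFun r κ x y = 0 := by
  have hne : x ≠ y := fun he => h (he ▸ le_rfl)
  rw [klsFun_of_ne r κ hne, Finset.Ico_eq_empty (fun hlt => h hlt.le), Finset.sum_empty,
    lhn_zero]

lemma klsFun_half (r : P → P → ℕ) (κ : IncidenceAlgebra (Polynomial ℤ) P) {x y : P}
    (h : x < y) : klsFun r κ x y = 0 ∨ 2 * (klsFun r κ x y).natDegree < r x y := by
  rw [klsFun_of_ne r κ h.ne]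
  exact lhn_half _ _

lemma klsFun_natDegree_le (r : P → P → ℕ) (κ : IncidenceAlgebra (Polynomial ℤ) P) {x y : P}
    (h : x ≤ y) : (klsFun r κ x y).natDegree ≤ r x y := by
  rcases eq_or_lt_of_le h with rfl | hlt
  · rw [klsFun_self, natDegree_one]; exact Nat.zero_le _
  · rcases klsFun_half r κ hlt with h0 | h2
    · rw [h0, natDegree_zero]; exact Nat.zero_le _
    · omega

lemma klsFun_reflect (r : P → P → ℕ)
    (hr_add : ∀ x y z : P, x ≤ y → y ≤ z → r x y + r y z = r x z)
    (κ : IncidenceAlgebra (Polynomial ℤ) P)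
    (hκ_deg : ∀ x y : P, x ≤ y → (κ x y).natDegree ≤ r x y)
    (hκ_diag : ∀ x : P, κ x x = 1)
    (hκ_right : κ * IncidenceAlgebra.bar r κ = 1) :
    ∀ x y : P, x ≤ y → (klsFun r κ x y).reflect (r x y)
      = ∑ z ∈ Finset.Icc x y, klsFun r κ x z * κ z y := by
  classical
  have hr0 : ∀ x : P, r x x = 0 := fun x => by
    have := hr_add x x x le_rfl le_rfl; omega
  suffices H : ∀ n : ℕ, ∀ x y : P, (Finset.Icc x y).card ≤ n → x ≤ y →
      (klsFun r κ x y).reflect (r x y) = ∑ z ∈ Finset.Icc x y, klsFun r κ x z * κ z y by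
    intro x y hxy
    exact H (Finset.Icc x y).card x y le_rfl hxy
  intro n
  induction n with
  | zero =>
    intro x y hcard hxy
    have : x ∈ Finset.Icc x y := Finset.mem_Icc.mpr ⟨le_rfl, hxy⟩
    have := Finset.card_pos.mpr ⟨x, this⟩
    omega
  | succ n ih =>
    intro x y hcard hxy
    rcases eq_or_lt_of_le hxy with rfl | hlt
    · rw [Finset.Icc_self, Finset.sum_singleton, klsFun_self, hκ_diag, mul_one, hr0,
        Polynomial.reflect_one, pow_zero]
    · set N := r x y with hN
      set Q : Polynomial ℤ := ∑ z ∈ Finset.Ico x y, klsFun r κ x z * κ z y with hQ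
      have hgxy : klsFun r κ x y = lhn N Q := klsFun_of_ne r κ hlt.ne
      have hIH : ∀ z ∈ Finset.Ico x y,
          (klsFun r κ x z).reflect (r x z) = ∑ w ∈ Finset.Icc x z, klsFun r κ x w * κ w z := by
        intro z hz
        have hc := card_Icc_lt hz
        exact ih x z (by omega) (Finset.mem_Ico.mp hz).1
      have hQdeg : Q.natDegree ≤ N := by
        refine natDegree_sum_le_of_forall_le _ _ fun z hz => ?_
        obtain ⟨hxz, hzy⟩ := Finset.mem_Ico.mp hz
        calc (klsFun r κ x z * κ z y).natDegree
            ≤ (klsFun r κ x z).natDegree + (κ z y).natDegree := natDegree_mul_le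
          _ ≤ r x z + r z y :=
              add_le_add (klsFun_natDegree_le r κ hxz) (hκ_deg z y hzy.le)
          _ = N := hr_add x z y hxz hzy.le
      have hbaryy : IncidenceAlgebra.bar r κ y y = 1 := by
        rw [bar_apply, hr0, hκ_diag, Polynomial.reflect_one, pow_zero]
      have hQsym : Q.reflect N = -Q := by
        calc Q.reflect N
            = ∑ z ∈ Finset.Ico x y, (klsFun r κ x z * κ z y).reflect N := by
              rw [hQ, reflect_sum]
          _ = ∑ z ∈ Finset.Ico x y,
                (∑ w ∈ Finset.Icc x z, klsFun r κ x w * κ w z)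
                  * IncidenceAlgebra.bar r κ z y := by
              refine Finset.sum_congr rfl fun z hz => ?_
              obtain ⟨hxz, hzy⟩ := Finset.mem_Ico.mp hz
              rw [hN, ← hr_add x z y hxz hzy.le,
                Polynomial.reflect_mul _ _ (klsFun_natDegree_le r κ hxz) (hκ_deg z y hzy.le),
                hIH z hz, bar_apply]
          _ = ∑ z ∈ Finset.Ico x y, ∑ w ∈ Finset.Icc x z,
                klsFun r κ x w * κ w z * IncidenceAlgebra.bar r κ z y := by
              refine Finset.sum_congr rfl fun z _ => ?_
              rw [Finset.sum_mul]
          _ = ∑ z ∈ Finset.Ico x y, ∑ w ∈ Finset.Icc x y,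
                if w ≤ z then klsFun r κ x w * κ w z * IncidenceAlgebra.bar r κ z y else 0 := by
              refine Finset.sum_congr rfl fun z hz => ?_
              obtain ⟨hxz, hzy⟩ := Finset.mem_Ico.mp hz
              rw [← Finset.sum_filter]
              refine Finset.sum_congr ?_ fun _ _ => rfl
              ext w
              simp only [Finset.mem_Icc, Finset.mem_filter]
              exact ⟨fun ⟨h1, h2⟩ => ⟨⟨h1, h2.trans hzy.le⟩, h2⟩, fun ⟨⟨h1, _⟩, h2⟩ => ⟨h1, h2⟩⟩
          _ = ∑ w ∈ Finset.Icc x y, ∑ z ∈ Finset.Ico x y,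
                if w ≤ z then klsFun r κ x w * κ w z * IncidenceAlgebra.bar r κ z y else 0 :=
              Finset.sum_comm
          _ = ∑ w ∈ Finset.Icc x y, ∑ z ∈ Finset.Ico w y,
                klsFun r κ x w * κ w z * IncidenceAlgebra.bar r κ z y := by
              refine Finset.sum_congr rfl fun w hw => ?_
              obtain ⟨hxw, hwy⟩ := Finset.mem_Icc.mp hw
              rw [← Finset.sum_filter]
              refine Finset.sum_congr ?_ fun _ _ => rfl
              ext z
              simp only [Finset.mem_Ico, Finset.mem_filter]
              exact ⟨fun ⟨⟨_, h2⟩, h3⟩ => ⟨h3, h2⟩, fun ⟨h1, h2⟩ => ⟨⟨hxw.trans h1, h2⟩, h1⟩⟩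
          _ = ∑ w ∈ Finset.Icc x y,
                klsFun r κ x w * ((if w = y then 1 else 0) - κ w y) := by
              refine Finset.sum_congr rfl fun w hw => ?_
              obtain ⟨hxw, hwy⟩ := Finset.mem_Icc.mp hw
              have hins : ∑ z ∈ Finset.Icc w y, κ w z * IncidenceAlgebra.bar r κ z y
                  = κ w y * IncidenceAlgebra.bar r κ y y
                    + ∑ z ∈ Finset.Ico w y, κ w z * IncidenceAlgebra.bar r κ z y := by
                rw [← Finset.Ico_insert_right hwy,
                  Finset.sum_insert Finset.right_notMem_Ico]
              have hmul : ∑ z ∈ Finset.Icc w y, κ w z * IncidenceAlgebra.bar r κ z y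
                  = if w = y then 1 else 0 := by
                rw [← IncidenceAlgebra.mul_apply, hκ_right, IncidenceAlgebra.one_apply]
              have hinner : ∑ z ∈ Finset.Ico w y, κ w z * IncidenceAlgebra.bar r κ z y
                  = (if w = y then 1 else 0) - κ w y := by
                rw [← hmul, hins, hbaryy, mul_one]; ring
              rw [← hinner, Finset.mul_sum]
              exact Finset.sum_congr rfl fun z _ => mul_assoc _ _ _
          _ = -Q := by
              rw [← Finset.Ico_insert_right hxy, Finset.sum_insert Finset.right_notMem_Ico]
              rw [if_pos rfl, hκ_diag, sub_self, mul_zero, zero_add, hQ,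
                ← Finset.sum_neg_distrib]
              refine Finset.sum_congr rfl fun w hw => ?_
              rw [if_neg (Finset.mem_Ico.mp hw).2.ne]
              ring
      have hrefl := reflect_lhn_eq N Q hQdeg hQsym
      rw [hgxy, hrefl, ← Finset.Ico_insert_right hxy,
        Finset.sum_insert Finset.right_notMem_Ico, ← hgxy, hgxy, hκ_diag, mul_one, ← hQ]

end KLSAux

/-- Given a locally finite poset `P` with a weak rank function `r` and a `P`-kernel `κ` in the
incidence algebra of `P` over `ℤ[t]`, there is a unique `g ∈ 𝓘_{1/2}(P)` with `ḡ = g * κ`: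
the left Kazhdan–Lusztig–Stanley function associated with `κ`. -/
theorem existsUnique_left_KLS_function {P : Type*} [PartialOrder P] [LocallyFiniteOrder P]
    [DecidableEq P] (r : P → P → ℕ)
    (hr_pos : ∀ x y : P, x < y → 0 < r x y)
    (hr_add : ∀ x y z : P, x ≤ y → y ≤ z → r x y + r y z = r x z)
    (κ : IncidenceAlgebra (Polynomial ℤ) P)
    (hκ_deg : ∀ x y : P, x ≤ y → (κ x y).natDegree ≤ r x y)
    (hκ_diag : ∀ x : P, κ x x = 1)
    (hκ_kernel : IncidenceAlgebra.bar r κ * κ = 1) :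
    ∃! g : IncidenceAlgebra (Polynomial ℤ) P,
      (∀ x : P, g x x = 1) ∧
      (∀ x y : P, x < y → g x y = 0 ∨ 2 * (g x y).natDegree < r x y) ∧
      ∀ x y : P, x ≤ y →
        (g x y).reflect (r x y) = ∑ z ∈ Finset.Icc x y, g x z * κ z y := by
  classical
  have hr0 : ∀ x : P, r x x = 0 := fun x => by
    have := hr_add x x x le_rfl le_rfl; omega
  have hbarκ_deg : ∀ a b : P, a ≤ b →
      ((IncidenceAlgebra.bar r κ) a b).natDegree ≤ r a b := fun a b hab =>
    KLSAux.natDegree_reflect_le (hκ_deg a b hab)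
  have hκ_right : κ * IncidenceAlgebra.bar r κ = 1 := by
    have h := congrArg (IncidenceAlgebra.bar r) hκ_kernel
    rwa [KLSAux.bar_mul r hr_add _ _ hbarκ_deg hκ_deg, KLSAux.bar_bar,
      KLSAux.bar_one r hr0] at h
  set gf : P → P → Polynomial ℤ := KLSAux.klsFun r κ with hgf
  refine ⟨⟨gf, fun a b h => KLSAux.klsFun_not_le r κ h⟩, ⟨?_, ?_, ?_⟩, ?_⟩
  · intro x
    exact KLSAux.klsFun_self r κ x
  · intro x y hxy
    exact KLSAux.klsFun_half r κ hxy
  · intro x y hxy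
    exact KLSAux.klsFun_reflect r hr_add κ hκ_deg hκ_diag hκ_right x y hxy
  · rintro g' ⟨h1, h2, h3⟩
    apply IncidenceAlgebra.ext
    suffices H : ∀ n : ℕ, ∀ a b : P, (Finset.Icc a b).card ≤ n → a ≤ b →
        g' a b = KLSAux.klsFun r κ a b by
      intro a b hab
      exact H (Finset.Icc a b).card a b le_rfl hab
    intro n
    induction n with
    | zero =>
      intro a b hcard hab
      have : a ∈ Finset.Icc a b := Finset.mem_Icc.mpr ⟨le_rfl, hab⟩
      have := Finset.card_pos.mpr ⟨a, this⟩
      omega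
    | succ n ih =>
      intro a b hcard hab
      rcases eq_or_lt_of_le hab with rfl | hlt
      · rw [h1 a, KLSAux.klsFun_self]
      · set Q : Polynomial ℤ := ∑ z ∈ Finset.Ico a b, KLSAux.klsFun r κ a z * κ z b with hQ
        have hQ' : ∑ z ∈ Finset.Ico a b, g' a z * κ z b = Q := by
          refine Finset.sum_congr rfl fun z hz => ?_
          have hc := KLSAux.card_Icc_lt hz
          rw [ih a z (by omega) (Finset.mem_Ico.mp hz).1]
        have heq : (g' a b).reflect (r a b) = g' a b + Q := by
          rw [h3 a b hab, ← Finset.Ico_insert_right hab,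
            Finset.sum_insert Finset.right_notMem_Ico, hκ_diag, mul_one, hQ']
        rw [KLSAux.eq_lhn (h2 a b hlt) heq, KLSAux.klsFun_of_ne r κ hlt.ne]
end

section
/- Let P be a locally finite partially ordered set with a weak rank function r. If f and g in the incidence algebra of P over ℤ[t] satisfy deg(f x y) ≤ r x y and deg(g x y) ≤ r x y for all x ≤ y, then every entry of the convolution product satisfies deg((f*g) x y) ≤ r x y, and \overline{f*g} = \bar f * \bar g; that is, for all x ≤ z, Polynomial.reflect (r x z) ((f*g) x z) = Σ_{x ≤ y ≤ z} Polynomial.reflect (r x y) (f x y) · Polynomial.reflect (r y z) (g y z). -/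
open Finset Polynomial

private lemma reflect_finset_sum {ι : Type*} (N : ℕ) (s : Finset ι) (F : ι → Polynomial ℤ) :
    (∑ i ∈ s, F i).reflect N = ∑ i ∈ s, (F i).reflect N := by
  classical
  induction s using Finset.induction_on with
  | empty => simp
  | insert _ _ h ih =>
      rw [Finset.sum_insert h, Finset.sum_insert h, Polynomial.reflect_add, ih]

/-- If `f` and `g` in the incidence algebra of `P` over `ℤ[t]` satisfy the degree bound
`deg (f x y) ≤ r x y` (resp. for `g`) for a weak rank function `r`, then so does `f * g`,
and the bar involution is multiplicative: `overline{f * g} = f̄ * ḡ`. -/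
theorem bar_mul {P : Type*} [PartialOrder P] [LocallyFiniteOrder P]
    [DecidableEq P] (r : P → P → ℕ)
    (hr_pos : ∀ x y : P, x < y → 0 < r x y)
    (hr_add : ∀ x y z : P, x ≤ y → y ≤ z → r x y + r y z = r x z)
    (f g : IncidenceAlgebra (Polynomial ℤ) P)
    (hf : ∀ x y : P, x ≤ y → (f x y).natDegree ≤ r x y)
    (hg : ∀ x y : P, x ≤ y → (g x y).natDegree ≤ r x y) :
    (∀ x y : P, x ≤ y → ((f * g) x y).natDegree ≤ r x y) ∧
      IncidenceAlgebra.bar r (f * g) = IncidenceAlgebra.bar r f * IncidenceAlgebra.bar r g ∧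
      ∀ x z : P, x ≤ z →
        ((f * g) x z).reflect (r x z) =
          ∑ y ∈ Finset.Icc x z, (f x y).reflect (r x y) * (g y z).reflect (r y z) := by
  have key : ∀ x z : P, x ≤ z →
      ((f * g) x z).reflect (r x z) =
        ∑ y ∈ Finset.Icc x z, (f x y).reflect (r x y) * (g y z).reflect (r y z) := by
    intro x z hxz
    rw [IncidenceAlgebra.mul_apply, reflect_finset_sum]
    refine Finset.sum_congr rfl fun y hy => ?_
    obtain ⟨hxy, hyz⟩ := Finset.mem_Icc.1 hy
    rw [← hr_add x y z hxy hyz, Polynomial.reflect_mul _ _ (hf x y hxy) (hg y z hyz)]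
  have deg : ∀ x y : P, x ≤ y → ((f * g) x y).natDegree ≤ r x y := by
    intro x z hxz
    rw [IncidenceAlgebra.mul_apply]
    refine (Polynomial.natDegree_sum_le_of_forall_le _ _ fun y hy => ?_)
    obtain ⟨hxy, hyz⟩ := Finset.mem_Icc.1 hy
    calc ((f x y) * (g y z)).natDegree ≤ (f x y).natDegree + (g y z).natDegree :=
          Polynomial.natDegree_mul_le
      _ ≤ r x y + r y z := add_le_add (hf x y hxy) (hg y z hyz)
      _ = r x z := hr_add x y z hxy hyz
  refine ⟨deg, ?_, key⟩
  refine IncidenceAlgebra.ext fun x z hxz => ?_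
  show ((f * g) x z).reflect (r x z) = _
  rw [IncidenceAlgebra.mul_apply]
  exact key x z hxz
end
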